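/- Let J₃ be an invertible real d×d matrix, J₂ a real D×d matrix (d ≤ D) of full column rank, and J₁ a real D×D matrix all of whose singular values are at least 1 (equivalently, every eigenvalue of J₁ᵀJ₁ is ≥ 1). Then the Gram determinant of the composition J = J₁J₂J₃ satisfies log det(JᵀJ) ≤ log det(J₁ᵀJ₁) + log det(J₂ᵀJ₂) + log det(J₃ᵀJ₃). -/

import Mathlib

open Matrix

section Aux

variable {n : Type*} [Fintype n] [DecidableEq n]

/-- If `C` is PSD and `1 - C` is PSD then every eigenvalue of `C` is at most `1`. -/
private lemma aux_eigenvalue_le_one {C : Matrix n n ℝ} (hC : C.PosSemidef)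
    (h1 : (1 - C).PosSemidef) (i : n) : hC.1.eigenvalues i ≤ 1 := by
  set v : n → ℝ := ⇑(hC.1.eigenvectorBasis i) with hv
  have hvv : dotProduct (star v) v = 1 := by
    have h := hC.1.eigenvectorBasis.orthonormal.1 i
    have h2 : (inner ℝ (hC.1.eigenvectorBasis i) (hC.1.eigenvectorBasis i) : ℝ) = 1 := by
      rw [real_inner_self_eq_norm_sq, h]; norm_num
    rw [EuclideanSpace.inner_eq_star_dotProduct] at h2
    rw [dotProduct_comm]; exact h2
  have h0 := h1.dotProduct_mulVec_nonneg v
  rw [sub_mulVec, one_mulVec, dotProduct_sub, hC.1.mulVec_eigenvectorBasis i,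
    dotProduct_smul, hvv] at h0
  simp only [smul_eq_mul, mul_one] at h0
  linarith

/-- If `C` is PSD and `1 - C` is PSD then `det C ≤ 1`. -/
private lemma aux_det_le_one {C : Matrix n n ℝ} (hC : C.PosSemidef)
    (h1 : (1 - C).PosSemidef) : C.det ≤ 1 := by
  rw [hC.1.det_eq_prod_eigenvalues]
  refine Finset.prod_le_one (fun i _ => ?_) (fun i _ => ?_)
  · exact hC.eigenvalues_nonneg i
  · exact aux_eigenvalue_le_one hC h1 i

open scoped MatrixOrder in
/-- Monotonicity of determinants: if `A` is PSD, `B` is positive definite and `B - A` is PSD,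
then `det A ≤ det B`. -/
private lemma aux_det_le_det {A B : Matrix n n ℝ} (hA : A.PosSemidef) (hB : B.PosDef)
    (hBA : (B - A).PosSemidef) : A.det ≤ B.det := by
  have hBsd : B.PosSemidef := hB.posSemidef
  set S : Matrix n n ℝ := CFC.sqrt B with hSdef
  have hSpsd : S.PosSemidef := (CFC.sqrt_nonneg B).posSemidef
  have hSS : S * S = B := CFC.sqrt_mul_sqrt_self B hBsd.nonneg
  have hdetSS : S.det * S.det = B.det := by rw [← det_mul, hSS]
  have hdetS : IsUnit S.det := by
    refine isUnit_iff_ne_zero.mpr (fun h => ?_)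
    have := hB.det_pos
    rw [← hdetSS, h, zero_mul] at this
    exact lt_irrefl _ this
  set R : Matrix n n ℝ := S⁻¹ with hRdef
  have hRS : R * S = 1 := nonsing_inv_mul S hdetS
  have hSR : S * R = 1 := mul_nonsing_inv S hdetS
  have hRherm : R.IsHermitian := hSpsd.1.inv
  have hRBR : R * B * R = 1 := by
    calc R * B * R = R * S * (S * R) := by rw [← hSS]; simp only [Matrix.mul_assoc]
    _ = 1 := by rw [hRS, hSR, one_mul]
  have hC : (R * A * R).PosSemidef := by
    have := hA.mul_mul_conjTranspose_same R
    rwa [hRherm.eq] at this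
  have h1C : (1 - R * A * R).PosSemidef := by
    have := hBA.mul_mul_conjTranspose_same R
    rw [hRherm.eq] at this
    have heq : R * (B - A) * R = 1 - R * A * R := by
      rw [Matrix.mul_sub, Matrix.sub_mul, hRBR]
    rwa [heq] at this
  have hdet := aux_det_le_one hC h1C
  rw [det_mul, det_mul] at hdet
  -- hdet : R.det * A.det * R.det ≤ 1
  have hdetR : R.det * S.det = 1 := by
    rw [← det_mul, hRS, det_one]
  have hBpos := hB.det_pos
  have hSne : S.det ≠ 0 := hdetS.ne_zero
  have hdetRval : R.det = (S.det)⁻¹ := eq_inv_of_mul_eq_one_left hdetR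
  rw [hdetRval] at hdet
  have : A.det / B.det ≤ 1 := by
    rw [← hdetSS]
    calc A.det / (S.det * S.det) = (S.det)⁻¹ * A.det * (S.det)⁻¹ := by
          field_simp
    _ ≤ 1 := hdet
  calc A.det = A.det / B.det * B.det := by field_simp
  _ ≤ 1 * B.det := by exact mul_le_mul_of_nonneg_right this hBpos.le
  _ = B.det := one_mul _

end Aux

section Rect

variable {D d : ℕ}

/-- Conjugating a positive definite matrix by a full-column-rank rectangular matrix
gives a positive definite matrix. -/
private lemma aux_posDef_conj (J2 : Matrix (Fin D) (Fin d) ℝ) (hG : IsUnit (J2ᵀ * J2).det)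
    {M : Matrix (Fin D) (Fin D) ℝ} (hM : M.PosDef) : (J2ᵀ * M * J2).PosDef := by
  have hJinj : ∀ x : Fin d → ℝ, x ≠ 0 → J2 *ᵥ x ≠ 0 := by
    intro x hx h
    apply hx
    have hGu : IsUnit (J2ᵀ * J2) := (isUnit_iff_isUnit_det _).2 hG
    have hinj := mulVec_injective_iff_isUnit.mpr hGu
    have : (J2ᵀ * J2) *ᵥ x = (J2ᵀ * J2) *ᵥ 0 := by
      rw [mulVec_zero, ← mulVec_mulVec, h, mulVec_zero]
    exact hinj this
  rw [posDef_iff_dotProduct_mulVec]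
  constructor
  · have : (J2ᵀ * M * J2)ᴴ = J2ᵀ * M * J2 := by
      rw [conjTranspose_mul, conjTranspose_mul, hM.isHermitian.eq]
      rw [conjTranspose_eq_transpose_of_trivial, conjTranspose_eq_transpose_of_trivial,
        transpose_transpose, Matrix.mul_assoc]
    exact this
  · intro x hx
    have hJx := hJinj x hx
    have key : dotProduct (star x) ((J2ᵀ * M * J2) *ᵥ x)
        = dotProduct (star (J2 *ᵥ x)) (M *ᵥ (J2 *ᵥ x)) := by
      rw [← mulVec_mulVec, ← mulVec_mulVec, dotProduct_mulVec, vecMul_transpose]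
      simp only [star_trivial]
    rw [key]
    exact hM.dotProduct_mulVec_pos hJx

open scoped MatrixOrder in
/-- The key inequality: if `M - 1` is PSD and `J2` has full column rank, then
`det (J2ᵀ M J2) ≤ det M * det (J2ᵀ J2)`. -/
private lemma aux_key (J2 : Matrix (Fin D) (Fin d) ℝ) (hG : IsUnit (J2ᵀ * J2).det)
    {M : Matrix (Fin D) (Fin D) ℝ} (hM1 : (M - 1).PosSemidef) :
    (J2ᵀ * M * J2).det ≤ M.det * (J2ᵀ * J2).det := by
  set G : Matrix (Fin d) (Fin d) ℝ := J2ᵀ * J2 with hGdef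
  set P : Matrix (Fin D) (Fin D) ℝ := M - 1 with hPdef
  have hMeq : M = P + 1 := by rw [hPdef]; abel
  have hMpd : M.PosDef := by
    rw [hMeq]; exact Matrix.PosDef.posSemidef_add hM1 Matrix.PosDef.one
  have hGpd : G.PosDef := by
    have := aux_posDef_conj J2 hG Matrix.PosDef.one
    rwa [Matrix.mul_one] at this
  have hGinv : (G⁻¹).PosDef := hGpd.inv
  have hGiG : G⁻¹ * G = 1 := nonsing_inv_mul G hG
  have hGGi : G * G⁻¹ = 1 := mul_nonsing_inv G hG
  -- the square root of P
  set Q : Matrix (Fin D) (Fin D) ℝ := CFC.sqrt P with hQdef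
  have hQpsd : Q.PosSemidef := (CFC.sqrt_nonneg P).posSemidef
  have hQQ : Q * Q = P := CFC.sqrt_mul_sqrt_self P hM1.nonneg
  -- the projection onto the column space of J2
  set T : Matrix (Fin D) (Fin D) ℝ := J2 * G⁻¹ * J2ᵀ with hTdef
  have hTpsd : T.PosSemidef := by
    have := hGinv.posSemidef.mul_mul_conjTranspose_same J2
    rwa [conjTranspose_eq_transpose_of_trivial] at this
  have hTidem : T * T = T := by
    rw [hTdef]
    calc J2 * G⁻¹ * J2ᵀ * (J2 * G⁻¹ * J2ᵀ)
        = J2 * (G⁻¹ * ((J2ᵀ * J2) * G⁻¹)) * J2ᵀ := by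
          simp only [Matrix.mul_assoc]
    _ = J2 * G⁻¹ * J2ᵀ := by rw [← hGdef, hGGi, Matrix.mul_one]
  have h1T : (1 - T).PosSemidef := by
    have h := posSemidef_conjTranspose_mul_self (1 - T)
    have heq : (1 - T)ᴴ * (1 - T) = 1 - T := by
      have hth : (1 - T)ᴴ = 1 - T := by
        rw [conjTranspose_sub, conjTranspose_one, hTpsd.1.eq]
      rw [hth, Matrix.sub_mul, Matrix.mul_sub, Matrix.mul_sub, hTidem]
      simp only [Matrix.mul_one, Matrix.one_mul]
      abel
    rwa [heq] at h
  -- S = Q T Q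
  set S : Matrix (Fin D) (Fin D) ℝ := Q * T * Q with hSdef
  have hSpsd : S.PosSemidef := by
    have := hTpsd.mul_mul_conjTranspose_same Q
    rwa [hQpsd.1.eq] at this
  have hPS : (P - S).PosSemidef := by
    have := h1T.mul_mul_conjTranspose_same Q
    rw [hQpsd.1.eq] at this
    have heq : Q * (1 - T) * Q = P - S := by
      rw [Matrix.mul_sub, Matrix.sub_mul, Matrix.mul_one, hQQ, hSdef]
    rwa [heq] at this
  -- det (1 + S) ≤ det M
  have h1Spsd : ((1 : Matrix (Fin D) (Fin D) ℝ) + S).PosSemidef :=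
    Matrix.PosDef.one.posSemidef.add hSpsd
  have hsub : (M - (1 + S)).PosSemidef := by
    have heq : M - (1 + S) = P - S := by rw [hMeq]; abel
    rwa [heq]
  have hdet1S : ((1 : Matrix (Fin D) (Fin D) ℝ) + S).det ≤ M.det :=
    aux_det_le_det h1Spsd hMpd hsub
  -- rewrite det (J2ᵀ M J2)
  have hfact : J2ᵀ * M * J2 = G * (1 + G⁻¹ * (J2ᵀ * P * J2)) := by
    rw [Matrix.mul_add, Matrix.mul_one, ← Matrix.mul_assoc, hGGi, Matrix.one_mul, hMeq,
      Matrix.mul_add, Matrix.add_mul, Matrix.mul_one, ← hGdef]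
    abel
  have hsylv : (1 + G⁻¹ * (J2ᵀ * P * J2)).det = ((1 : Matrix (Fin D) (Fin D) ℝ) + S).det := by
    have h1 : (1 : Matrix (Fin d) (Fin d) ℝ) + G⁻¹ * (J2ᵀ * P * J2)
        = 1 + (G⁻¹ * J2ᵀ * Q) * (Q * J2) := by
      rw [← hQQ]; simp only [Matrix.mul_assoc]
    have h2 : (1 : Matrix (Fin D) (Fin D) ℝ) + S = 1 + (Q * J2) * (G⁻¹ * J2ᵀ * Q) := by
      rw [hSdef, hTdef]; simp only [Matrix.mul_assoc]
    rw [h1, h2, det_one_add_mul_comm]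
  have hdet : (J2ᵀ * M * J2).det = G.det * ((1 : Matrix (Fin D) (Fin D) ℝ) + S).det := by
    rw [hfact, det_mul, hsylv]
  rw [hdet]
  calc G.det * ((1 : Matrix (Fin D) (Fin D) ℝ) + S).det ≤ G.det * M.det :=
        mul_le_mul_of_nonneg_left hdet1S hGpd.det_pos.le
  _ = M.det * G.det := mul_comm _ _

end Rect

/-- Proposition 1 of the Trumpets paper, three layers: for `J₃ : d × d`
invertible, `J₂ : D × d` of full column rank, and `J₁ : D × D` all of whose singular values
are at least `1` (i.e. `J₁ᵀJ₁ - I ⪰ 0`), the composition `J = J₁J₂J₃` satisfies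
`log det(JᵀJ) ≤ log det(J₁ᵀJ₁) + log det(J₂ᵀJ₂) + log det(J₃ᵀJ₃)`. -/
theorem logdet_layerwise_bound (D d : ℕ) (hd : d ≤ D)
    (J3 : Matrix (Fin d) (Fin d) ℝ) (hJ3 : IsUnit J3.det)
    (J2 : Matrix (Fin D) (Fin d) ℝ) (hJ2 : IsUnit (J2ᵀ * J2).det)
    (J1 : Matrix (Fin D) (Fin D) ℝ) (hJ1 : (J1ᵀ * J1 - 1).PosSemidef) :
    Real.log (((J1 * J2 * J3)ᵀ * (J1 * J2 * J3)).det) ≤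
      Real.log ((J1ᵀ * J1).det) + Real.log ((J2ᵀ * J2).det) + Real.log ((J3ᵀ * J3).det) := by
  set M : Matrix (Fin D) (Fin D) ℝ := J1ᵀ * J1 with hMdef
  have hMpd : M.PosDef := by
    have : M = (M - 1) + 1 := by abel
    rw [this]; exact Matrix.PosDef.posSemidef_add hJ1 Matrix.PosDef.one
  have hGpd : (J2ᵀ * J2).PosDef := by
    have := aux_posDef_conj J2 hJ2 Matrix.PosDef.one
    rwa [Matrix.mul_one] at this
  have hXpd : (J2ᵀ * M * J2).PosDef := aux_posDef_conj J2 hJ2 hMpd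
  have hmat : (J1 * J2 * J3)ᵀ * (J1 * J2 * J3) = J3ᵀ * (J2ᵀ * M * J2) * J3 := by
    rw [hMdef]
    simp only [Matrix.transpose_mul, Matrix.mul_assoc]
  have hkey : (J2ᵀ * M * J2).det ≤ M.det * (J2ᵀ * J2).det := aux_key J2 hJ2 hJ1
  have hJ3ne : J3.det ≠ 0 := by
    intro h; rw [h] at hJ3; exact (by simpa using hJ3 : IsUnit (0 : ℝ)).ne_zero rfl
  have hJ3sq : (J3ᵀ * J3).det = J3.det * J3.det := by
    rw [det_mul, det_transpose]
  have hJ3sqpos : 0 < J3.det * J3.det := by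
    rcases lt_or_gt_of_ne hJ3ne with h | h
    · exact mul_pos_of_neg_of_neg h h
    · exact mul_pos h h
  have hLHSdet : ((J1 * J2 * J3)ᵀ * (J1 * J2 * J3)).det
      = J3.det * J3.det * (J2ᵀ * M * J2).det := by
    rw [hmat, det_mul, det_mul, det_transpose]; ring
  have hLHSpos : 0 < ((J1 * J2 * J3)ᵀ * (J1 * J2 * J3)).det := by
    rw [hLHSdet]; exact mul_pos hJ3sqpos hXpd.det_pos
  have hineq : ((J1 * J2 * J3)ᵀ * (J1 * J2 * J3)).det
      ≤ M.det * ((J2ᵀ * J2).det * (J3ᵀ * J3).det) := by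
    rw [hLHSdet, hJ3sq]
    calc J3.det * J3.det * (J2ᵀ * M * J2).det
        ≤ J3.det * J3.det * (M.det * (J2ᵀ * J2).det) :=
          mul_le_mul_of_nonneg_left hkey hJ3sqpos.le
    _ = M.det * ((J2ᵀ * J2).det * (J3.det * J3.det)) := by ring
  calc Real.log (((J1 * J2 * J3)ᵀ * (J1 * J2 * J3)).det)
      ≤ Real.log (M.det * ((J2ᵀ * J2).det * (J3ᵀ * J3).det)) :=
        Real.log_le_log hLHSpos hineq
  _ = Real.log (M.det) + Real.log ((J2ᵀ * J2).det) + Real.log ((J3ᵀ * J3).det) := by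
      rw [Real.log_mul hMpd.det_pos.ne' (mul_pos hGpd.det_pos (hJ3sq ▸ hJ3sqpos)).ne',
        Real.log_mul hGpd.det_pos.ne' (hJ3sq ▸ hJ3sqpos).ne']
      ring
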